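/- There exists a constant C₃ > 0 such that for all u, v ∈ H, one has ‖B(u, v)‖_{V'} = (∑ₙ kₙ⁻²|Bₙ(u, v)|²)^{1/2} ≤ C₃ |u| |v|. -/

import Mathlib

open Complex MeasureTheory Filter Topology

noncomputable section

/-- The wave numbers `kₙ = k₀ · 2ⁿ`. -/
def kk (k₀ : ℝ) (n : ℕ) : ℝ := k₀ * 2 ^ n

/-- The GOY nonlinearity `B(u,v)ₙ`; sequences are indexed from `1`, with the
convention that the `0`-th entry (playing the role of `u₀ = u₋₁ = 0`) vanishes. -/
def goyB (k₀ : ℝ) (u v : ℕ → ℂ) (n : ℕ) : ℂ :=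
  if n = 0 then 0 else
    Complex.I * (kk k₀ n : ℂ) *
      ((1 / 4) * (starRingEnd ℂ) (u (n + 1)) * (starRingEnd ℂ) (v (n - 1))
        - (1 / 2) * ((starRingEnd ℂ) (u (n + 1)) * (starRingEnd ℂ) (v (n + 2))
            + (starRingEnd ℂ) (u (n + 2)) * (starRingEnd ℂ) (v (n + 1)))
        + (1 / 8) * (starRingEnd ℂ) (u (n - 1)) * (starRingEnd ℂ) (v (n - 2)))

/-- Membership in `H`: square summability. -/
def memH (u : ℕ → ℂ) : Prop := Summable fun n => ‖u n‖ ^ 2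

/-- Membership in `V`. -/
def memV (k₀ : ℝ) (u : ℕ → ℂ) : Prop := Summable fun n => kk k₀ n ^ 2 * ‖u n‖ ^ 2

/-- `|u|² = ∑ₙ |uₙ|²`. -/
def hnormSq (u : ℕ → ℂ) : ℝ := ∑' n, ‖u n‖ ^ 2

/-- `‖u‖² = ∑ₙ kₙ²|uₙ|²`. -/
def vnormSq (k₀ : ℝ) (u : ℕ → ℂ) : ℝ := ∑' n, kk k₀ n ^ 2 * ‖u n‖ ^ 2

/-- `‖u‖_{V'}² = ∑ₙ kₙ⁻²|uₙ|²`. -/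
def vdualSq (k₀ : ℝ) (u : ℕ → ℂ) : ℝ := ∑' n, ‖u n‖ ^ 2 / kk k₀ n ^ 2

end


/-- Auxiliary algebraic (Cauchy–Schwarz) inequality. -/
lemma goy_aux (A p q r t e : ℝ) (hp : 0 ≤ p) (hq : 0 ≤ q) (hr : 0 ≤ r) (ht : 0 ≤ t)
    (he : 0 ≤ e) (h : e ≤ A * (1/4*p + 1/2*q + 1/2*r + 1/8*t)) :
    e ^ 2 ≤ A ^ 2 / 4 * p ^ 2 + (A ^ 2 * q ^ 2 + (A ^ 2 * r ^ 2 + A ^ 2 / 16 * t ^ 2)) := by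
  have hs : (1/4*p + 1/2*q + 1/2*r + 1/8*t) ^ 2 ≤ 1/4*p^2 + q^2 + r^2 + 1/16*t^2 := by
    nlinarith [sq_nonneg (1/2*p - q), sq_nonneg (1/2*p - r), sq_nonneg (1/2*p - 1/4*t),
      sq_nonneg (q - r), sq_nonneg (q - 1/4*t), sq_nonneg (r - 1/4*t)]
  have h2 : e ^ 2 ≤ (A * (1/4*p + 1/2*q + 1/2*r + 1/8*t)) ^ 2 := pow_le_pow_left₀ he h 2
  have h3 := mul_le_mul_of_nonneg_left hs (sq_nonneg A)
  nlinarith [h2, h3]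

/-- `‖B(u,v)‖_{V'} ≤ C₃ |u| |v|` for `u, v ∈ H`. -/
theorem stmt_4 (k₀ : ℝ) (hk₀ : 0 < k₀) :
    ∃ C₃ : ℝ, 0 < C₃ ∧ ∀ u v : ℕ → ℂ, u 0 = 0 → v 0 = 0 → memH u → memH v →
      Summable (fun n => ‖goyB k₀ u v n‖ ^ 2 / kk k₀ n ^ 2) ∧
      Real.sqrt (∑' n, ‖goyB k₀ u v n‖ ^ 2 / kk k₀ n ^ 2) ≤
        C₃ * Real.sqrt (hnormSq u) * Real.sqrt (hnormSq v) := by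
  refine ⟨2, by norm_num, fun u v hu0 hv0 hu hv => ?_⟩
  have hHu0 : (0:ℝ) ≤ hnormSq u := tsum_nonneg fun n => sq_nonneg _
  have hHv0 : (0:ℝ) ≤ hnormSq v := tsum_nonneg fun n => sq_nonneg _
  set A := Real.sqrt (hnormSq u) with hA
  set Bv := Real.sqrt (hnormSq v) with hBv
  have hA0 : 0 ≤ A := Real.sqrt_nonneg _
  have hBv0 : 0 ≤ Bv := Real.sqrt_nonneg _
  have hAsq : A ^ 2 = hnormSq u := Real.sq_sqrt hHu0
  have hBsq : Bv ^ 2 = hnormSq v := Real.sq_sqrt hHv0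
  -- ‖u k‖ ≤ A for every k
  have hub : ∀ k, ‖u k‖ ≤ A := by
    intro k
    have h1 : ‖u k‖ ^ 2 ≤ hnormSq u := Summable.le_tsum hu k fun j _ => sq_nonneg _
    have := Real.sqrt_le_sqrt h1
    rwa [Real.sqrt_sq (norm_nonneg _)] at this
  -- the majorant
  set b : ℕ → ℝ := fun m => ‖v m‖ ^ 2 with hb
  set f : ℕ → ℝ := fun n =>
    A ^ 2 / 4 * b (n - 1) + (A ^ 2 * b (n + 2) + (A ^ 2 * b (n + 1) + A ^ 2 / 16 * b (n - 2)))
    with hf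
  -- shifted summabilities
  have hbm1 : Summable fun n => b (n - 1) := by
    rw [← summable_nat_add_iff 1]; simpa [memH, hb] using hv
  have hbm2 : Summable fun n => b (n - 2) := by
    rw [← summable_nat_add_iff 2]; simpa [memH, hb] using hv
  have hbp1 : Summable fun n => b (n + 1) := (summable_nat_add_iff 1).mpr hv
  have hbp2 : Summable fun n => b (n + 2) := (summable_nat_add_iff 2).mpr hv
  have hsumf : Summable f :=
    (hbm1.mul_left _).add ((hbp2.mul_left _).add ((hbp1.mul_left _).add (hbm2.mul_left _)))
  -- pointwise bound
  have hpt : ∀ n, ‖goyB k₀ u v n‖ ^ 2 / kk k₀ n ^ 2 ≤ f n := by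
    intro n
    have hbnn : ∀ m, 0 ≤ b m := fun m => sq_nonneg _
    have hfn : 0 ≤ f n := by
      have h1 := hbnn (n-1); have h2 := hbnn (n+2); have h3 := hbnn (n+1); have h4 := hbnn (n-2)
      have hA2 : 0 ≤ A ^ 2 := sq_nonneg _
      simp only [hf]; positivity
    rcases eq_or_ne n 0 with rfl | hn
    · simp only [goyB, if_pos rfl, norm_zero]
      simpa using hfn
    · have hk : 0 < kk k₀ n := by
        have : (0:ℝ) < 2 ^ n := by positivity
        exact mul_pos hk₀ this
      rw [goyB, if_neg hn]
      set E : ℂ :=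
        (1 / 4) * (starRingEnd ℂ) (u (n + 1)) * (starRingEnd ℂ) (v (n - 1))
          - (1 / 2) * ((starRingEnd ℂ) (u (n + 1)) * (starRingEnd ℂ) (v (n + 2))
              + (starRingEnd ℂ) (u (n + 2)) * (starRingEnd ℂ) (v (n + 1)))
          + (1 / 8) * (starRingEnd ℂ) (u (n - 1)) * (starRingEnd ℂ) (v (n - 2)) with hE
      have hnorm : ‖Complex.I * (kk k₀ n : ℂ) * E‖ = kk k₀ n * ‖E‖ := by
        rw [norm_mul, norm_mul, Complex.norm_I, one_mul, Complex.norm_real,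
          Real.norm_of_nonneg hk.le]
      rw [hnorm]
      have heq : (kk k₀ n * ‖E‖) ^ 2 / kk k₀ n ^ 2 = ‖E‖ ^ 2 := by
        field_simp
      rw [heq]
      have h2 : ‖(1 / 4 : ℂ) * (starRingEnd ℂ) (u (n + 1)) * (starRingEnd ℂ) (v (n - 1))‖
          = 1/4 * ‖u (n+1)‖ * ‖v (n-1)‖ := by
        simp [norm_mul, RCLike.norm_conj]
      have h4 : ‖(1 / 8 : ℂ) * (starRingEnd ℂ) (u (n - 1)) * (starRingEnd ℂ) (v (n - 2))‖
          = 1/8 * ‖u (n-1)‖ * ‖v (n-2)‖ := by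
        simp [norm_mul, RCLike.norm_conj]
      have h3 : ‖(1 / 2 : ℂ) * ((starRingEnd ℂ) (u (n + 1)) * (starRingEnd ℂ) (v (n + 2))
              + (starRingEnd ℂ) (u (n + 2)) * (starRingEnd ℂ) (v (n + 1)))‖
          ≤ 1/2 * (‖u (n+1)‖ * ‖v (n+2)‖ + ‖u (n+2)‖ * ‖v (n+1)‖) := by
        rw [norm_mul]
        have hhalf : ‖(1/2 : ℂ)‖ = 1/2 := by norm_num
        rw [hhalf]
        have hx : ‖(starRingEnd ℂ) (u (n + 1)) * (starRingEnd ℂ) (v (n + 2))‖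
            = ‖u (n+1)‖ * ‖v (n+2)‖ := by simp [norm_mul, RCLike.norm_conj]
        have hy : ‖(starRingEnd ℂ) (u (n + 2)) * (starRingEnd ℂ) (v (n + 1))‖
            = ‖u (n+2)‖ * ‖v (n+1)‖ := by simp [norm_mul, RCLike.norm_conj]
        have h := norm_add_le ((starRingEnd ℂ) (u (n + 1)) * (starRingEnd ℂ) (v (n + 2)))
          ((starRingEnd ℂ) (u (n + 2)) * (starRingEnd ℂ) (v (n + 1)))
        rw [hx, hy] at h
        linarith
      have h1 : ‖E‖ ≤ ‖(1 / 4 : ℂ) * (starRingEnd ℂ) (u (n + 1)) * (starRingEnd ℂ) (v (n - 1))‖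
          + ‖(1 / 2 : ℂ) * ((starRingEnd ℂ) (u (n + 1)) * (starRingEnd ℂ) (v (n + 2))
              + (starRingEnd ℂ) (u (n + 2)) * (starRingEnd ℂ) (v (n + 1)))‖
          + ‖(1 / 8 : ℂ) * (starRingEnd ℂ) (u (n - 1)) * (starRingEnd ℂ) (v (n - 2))‖ := by
        rw [hE]
        refine le_trans (norm_add_le _ _) ?_
        have := norm_sub_le ((1 / 4 : ℂ) * (starRingEnd ℂ) (u (n + 1)) * (starRingEnd ℂ) (v (n - 1)))
          ((1 / 2 : ℂ) * ((starRingEnd ℂ) (u (n + 1)) * (starRingEnd ℂ) (v (n + 2))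
              + (starRingEnd ℂ) (u (n + 2)) * (starRingEnd ℂ) (v (n + 1))))
        linarith
      rw [h2, h4] at h1
      have htri : ‖E‖ ≤ A * (1/4 * ‖v (n-1)‖ + 1/2 * ‖v (n+2)‖ + 1/2 * ‖v (n+1)‖ + 1/8 * ‖v (n-2)‖) := by
        calc ‖E‖ ≤ 1/4 * ‖u (n+1)‖ * ‖v (n-1)‖
              + 1/2 * (‖u (n+1)‖ * ‖v (n+2)‖ + ‖u (n+2)‖ * ‖v (n+1)‖)
              + 1/8 * ‖u (n-1)‖ * ‖v (n-2)‖ := by linarith [h1, h3]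
          _ ≤ 1/4 * A * ‖v (n-1)‖ + 1/2 * (A * ‖v (n+2)‖ + A * ‖v (n+1)‖)
              + 1/8 * A * ‖v (n-2)‖ := by
            gcongr <;> exact hub _
          _ = A * (1/4 * ‖v (n-1)‖ + 1/2 * ‖v (n+2)‖ + 1/2 * ‖v (n+1)‖ + 1/8 * ‖v (n-2)‖) := by
            ring
      calc ‖E‖ ^ 2 ≤ A ^ 2 / 4 * ‖v (n-1)‖ ^ 2 + (A ^ 2 * ‖v (n+2)‖ ^ 2
            + (A ^ 2 * ‖v (n+1)‖ ^ 2 + A ^ 2 / 16 * ‖v (n-2)‖ ^ 2)) :=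
          goy_aux A _ _ _ _ _ (norm_nonneg _) (norm_nonneg _) (norm_nonneg _) (norm_nonneg _)
            (norm_nonneg _) htri
        _ = f n := by simp only [hf, hb]
  have hnneg : ∀ n, 0 ≤ ‖goyB k₀ u v n‖ ^ 2 / kk k₀ n ^ 2 := by
    intro n; positivity
  have hsum : Summable (fun n => ‖goyB k₀ u v n‖ ^ 2 / kk k₀ n ^ 2) :=
    Summable.of_nonneg_of_le hnneg hpt hsumf
  refine ⟨hsum, ?_⟩
  -- tsum bounds for the shifts
  have hb0 : b 0 = 0 := by simp [hb, hv0]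
  have hSm1 : ∑' n, b (n - 1) = ∑' n, b n := by
    rw [Summable.tsum_eq_zero_add hbm1]
    simp only [Nat.add_sub_cancel, Nat.zero_sub, hb0, zero_add]
  have hSm2 : ∑' n, b (n - 2) = ∑' n, b n := by
    rw [Summable.tsum_eq_zero_add hbm2]
    have he2 : (fun n : ℕ => b (n + 1 - 2)) = fun n : ℕ => b (n - 1) := by
      funext n; rfl
    simp only [Nat.zero_sub, hb0, zero_add, he2, hSm1]
  have hSp1 : ∑' n, b (n + 1) ≤ ∑' n, b n := by
    have h := Summable.sum_add_tsum_nat_add 1 hv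
    have hfin : 0 ≤ ∑ i ∈ Finset.range 1, b i := Finset.sum_nonneg fun i _ => sq_nonneg _
    simp only [hb] at h ⊢
    linarith
  have hSp2 : ∑' n, b (n + 2) ≤ ∑' n, b n := by
    have h := Summable.sum_add_tsum_nat_add 2 hv
    have hfin : 0 ≤ ∑ i ∈ Finset.range 2, b i := Finset.sum_nonneg fun i _ => sq_nonneg _
    simp only [hb] at h ⊢
    linarith
  have hbBv : ∑' n, b n = Bv ^ 2 := by rw [hBsq]; rfl
  have hA2 : 0 ≤ A ^ 2 := sq_nonneg _
  have htsumf : ∑' n, f n ≤ 4 * A ^ 2 * Bv ^ 2 := by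
    have e : ∑' n, f n = A ^ 2 / 4 * (∑' n, b (n - 1)) + (A ^ 2 * (∑' n, b (n + 2))
        + (A ^ 2 * (∑' n, b (n + 1)) + A ^ 2 / 16 * (∑' n, b (n - 2)))) := by
      rw [hf]
      rw [Summable.tsum_add (hbm1.mul_left _) ((hbp2.mul_left _).add ((hbp1.mul_left _).add (hbm2.mul_left _)))]
      rw [Summable.tsum_add (hbp2.mul_left _) ((hbp1.mul_left _).add (hbm2.mul_left _))]
      rw [Summable.tsum_add (hbp1.mul_left _) (hbm2.mul_left _)]
      rw [tsum_mul_left, tsum_mul_left, tsum_mul_left, tsum_mul_left]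
    rw [e, hSm1, hSm2, hbBv]
    have h1 : A ^ 2 * (∑' n, b (n + 2)) ≤ A ^ 2 * Bv ^ 2 := by
      rw [← hbBv]; exact mul_le_mul_of_nonneg_left hSp2 hA2
    have h2 : A ^ 2 * (∑' n, b (n + 1)) ≤ A ^ 2 * Bv ^ 2 := by
      rw [← hbBv]; exact mul_le_mul_of_nonneg_left hSp1 hA2
    nlinarith [h1, h2, mul_nonneg hA2 (sq_nonneg Bv)]
  have hle : ∑' n, ‖goyB k₀ u v n‖ ^ 2 / kk k₀ n ^ 2 ≤ 4 * A ^ 2 * Bv ^ 2 :=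
    le_trans (Summable.tsum_le_tsum hpt hsum hsumf) htsumf
  have hfinal : Real.sqrt (∑' n, ‖goyB k₀ u v n‖ ^ 2 / kk k₀ n ^ 2)
      ≤ Real.sqrt (4 * A ^ 2 * Bv ^ 2) := Real.sqrt_le_sqrt hle
  have hrhs : Real.sqrt (4 * A ^ 2 * Bv ^ 2) = 2 * A * Bv := by
    rw [show 4 * A ^ 2 * Bv ^ 2 = (2 * A * Bv) ^ 2 by ring,
      Real.sqrt_sq (by positivity)]
  rw [hrhs] at hfinal
  exact hfinal
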